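/- Let n, t, t_e, s, s_e be natural numbers with s ≤ t, s_e ≤ t_e, and n ≥ t + t_e + 1, and let c, c' ∈ {0,1}^n. If B_{t,t_e}(c) ∩ B_{t,t_e}(c') = ∅, then B_{s,s_e}(c) ∩ B_{s,s_e}(c') = ∅. Consequently, every t-breaks t_e-edit-errors resilient code of length n ≥ t + t_e + 1 can also be uniquely decoded over the channel that applies at most t_e edit errors followed by at most t breaks. -/

import Mathlib

/-- Cost structure for Levenshtein distance (formerly in Mathlib, removed since). -/
structure Levenshtein.Cost (α β δ : Type*) where
  delete : α → δ
  insert : β → δ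
  substitute : α → β → δ

/-- The default cost: unit cost for insertions, deletions and substitutions. -/
def Levenshtein.defaultCost {α : Type*} [DecidableEq α] : Levenshtein.Cost α α ℕ where
  delete _ := 1
  insert _ := 1
  substitute a b := if a = b then 0 else 1

/-- Auxiliary step of the Levenshtein computation (formerly Mathlib's `Levenshtein.impl`). -/
def Levenshtein.impl {α β δ : Type*} [AddZeroClass δ] [Min δ] (C : Levenshtein.Cost α β δ)
    (xs : List α) (y : β) (d : {r : List δ // 0 < r.length}) :
    {r : List δ // 0 < r.length} :=
  let ⟨ds, w⟩ := d
  xs.zip (ds.zip ds.tail) |>.foldr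
    (init := ⟨[ds.getLast (List.ne_nil_of_length_pos w) + C.insert y], by simp⟩)
    (fun ⟨x, d₀, d₁⟩ ⟨r, w⟩ =>
      ⟨min (C.delete x + r[0]) (min (C.insert y + d₀) (C.substitute x y + d₁)) :: r, by simp⟩)

/-- Levenshtein distances of all suffixes of `xs` to `ys` (formerly in Mathlib). -/
def suffixLevenshtein {α β δ : Type*} [AddZeroClass δ] [Min δ] (C : Levenshtein.Cost α β δ)
    (xs : List α) (ys : List β) : {r : List δ // 0 < r.length} :=
  ys.foldr
    (Levenshtein.impl C xs)
    (xs.foldr (init := ⟨[0], by simp⟩) (fun a ⟨r, w⟩ => ⟨(C.delete a + r[0]) :: r, by simp⟩))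

/-- The Levenshtein distance with cost `C` (formerly in Mathlib). -/
def levenshtein {α β δ : Type*} [AddZeroClass δ] [Min δ] (C : Levenshtein.Cost α β δ)
    (xs : List α) (ys : List β) : δ :=
  let ⟨r, w⟩ := suffixLevenshtein C xs ys
  r[0]

/-- The edit (Levenshtein) distance between two binary words. -/
def editDist (x y : List Bool) : ℕ :=
  levenshtein Levenshtein.defaultCost x y

/-- The `t`-breaks `te`-edit-errors channel output set of a binary word `w`. -/
def BreakEdit (t te : ℕ) (w : List Bool) : Set (Multiset (List Bool)) :=
  { S | Multiset.card S = t + 1 ∧ (∀ f ∈ S, f ≠ []) ∧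
      ∃ l : List (List Bool), (l : Multiset (List Bool)) = S ∧ editDist l.flatten w ≤ te }

section LevAux
variable {α β δ : Type*} [AddZeroClass δ] [Min δ] (C : Levenshtein.Cost α β δ)

theorem Levenshtein.defaultCost_insert {α : Type*} [DecidableEq α] (a : α) :
    (Levenshtein.defaultCost : Levenshtein.Cost α α ℕ).insert a = 1 := rfl

theorem Levenshtein.defaultCost_delete {α : Type*} [DecidableEq α] (a : α) :
    (Levenshtein.defaultCost : Levenshtein.Cost α α ℕ).delete a = 1 := rfl

theorem levAux_impl_length (xs : List α) (y : β) (d : {r : List δ // 0 < r.length})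
    (w : d.1.length = xs.length + 1) :
    (Levenshtein.impl C xs y d).1.length = xs.length + 1 := by
  induction xs generalizing d with
  | nil => rfl
  | cons x xs ih =>
    obtain ⟨ds, hds⟩ := d
    match ds, hds, w with
    | [], _, w => simp at w
    | [_], _, w => simp at w
    | d₁ :: d₂ :: ds, hds, w =>
      have := ih ⟨d₂ :: ds, by simp⟩ (by simpa using w)
      simp only [Levenshtein.impl, List.zip_cons_cons, List.tail_cons, List.foldr_cons,
        List.length_cons, List.getLast_cons_cons] at this ⊢
      omega

theorem levAux_suffix_length (xs : List α) (ys : List β) :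
    (suffixLevenshtein C xs ys).1.length = xs.length + 1 := by
  induction ys with
  | nil =>
    induction xs with
    | nil => rfl
    | cons _ xs ih =>
      simp only [suffixLevenshtein, List.foldr_cons, List.foldr_nil, List.length_cons] at ih ⊢
      omega
  | cons y ys ih =>
    exact levAux_impl_length C xs y _ ih

theorem levAux_suffix_cons₂ (xs : List α) (y : β) (ys : List β) :
    suffixLevenshtein C xs (y :: ys) = Levenshtein.impl C xs y (suffixLevenshtein C xs ys) := rfl

theorem levAux_impl_cons (x : α) (xs : List α) (y : β) (d : δ) (ds : List δ) (w) (w' : 0 < ds.length) :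
    Levenshtein.impl C (x :: xs) y ⟨d :: ds, w⟩ =
      ⟨min (C.delete x + (Levenshtein.impl C xs y ⟨ds, w'⟩).1[0]'(Levenshtein.impl C xs y ⟨ds, w'⟩).2)
        (min (C.insert y + d) (C.substitute x y + ds[0])) ::
          (Levenshtein.impl C xs y ⟨ds, w'⟩).1, by simp⟩ :=
  match ds, w' with | _ :: _, _ => rfl

theorem levAux_lev_eq (xs : List α) (ys : List β) :
    levenshtein C xs ys = (suffixLevenshtein C xs ys).1[0]'(by
      rw [levAux_suffix_length]; omega) := rfl

theorem levAux_suffix_cons₁ (x : α) (xs : List α) (ys : List β) :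
    (suffixLevenshtein C (x :: xs) ys).1 =
      levenshtein C (x :: xs) ys :: (suffixLevenshtein C xs ys).1 := by
  induction ys with
  | nil => rfl
  | cons y ys ih =>
    have key : ∃ h, (suffixLevenshtein C (x :: xs) (y :: ys)).1 =
        h :: (suffixLevenshtein C xs (y :: ys)).1 := by
      rw [levAux_suffix_cons₂]
      generalize hd : suffixLevenshtein C (x :: xs) ys = d at ih
      obtain ⟨l, hl⟩ := d
      simp only at ih
      subst ih
      rw [levAux_impl_cons C x xs y _ _ _ (suffixLevenshtein C xs ys).2]
      exact ⟨_, rfl⟩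
    obtain ⟨h, hh⟩ := key
    rw [hh]
    congr 1
    rw [levAux_lev_eq]
    simp only [hh, List.getElem_cons_zero]

theorem levAux_impl_nil (y : β) (d : {r : List δ // 0 < r.length}) (w : d.1.length = 1) :
    (Levenshtein.impl C [] y d).1 = [d.1[0]'(by omega) + C.insert y] := by
  obtain ⟨l, hl⟩ := d
  match l, hl, w with
  | [], hl, _ => simp at hl
  | [a], _, _ => rfl
  | _ :: _ :: _, _, w => simp at w

theorem levAux_impl_cons' (x : α) (xs : List α) (y : β) (a : δ)
    (s d : {r : List δ // 0 < r.length}) (h : d.1 = a :: s.1) :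
    (Levenshtein.impl C (x :: xs) y d).1 =
      min (C.delete x + (Levenshtein.impl C xs y s).1[0]'(Levenshtein.impl C xs y s).2)
        (min (C.insert y + a) (C.substitute x y + s.1[0]'s.2)) ::
          (Levenshtein.impl C xs y s).1 := by
  obtain ⟨l, hl⟩ := d
  simp only at h
  subst h
  rw [levAux_impl_cons C x xs y a s.1 _ s.2]

theorem levenshtein_nil_cons (y : β) (ys : List β) :
    levenshtein C [] (y :: ys) = levenshtein C [] ys + C.insert y := by
  have h := levAux_suffix_length C ([] : List α) ys
  rw [levAux_lev_eq, levAux_lev_eq]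
  simp only [levAux_suffix_cons₂, levAux_impl_nil C y _ h, List.getElem_cons_zero]

theorem levenshtein_cons_cons (x : α) (xs : List α) (y : β) (ys : List β) :
    levenshtein C (x :: xs) (y :: ys) =
      min (C.delete x + levenshtein C xs (y :: ys))
        (min (C.insert y + levenshtein C (x :: xs) ys)
          (C.substitute x y + levenshtein C xs ys)) := by
  rw [levAux_lev_eq]
  simp only [levAux_suffix_cons₂, levAux_impl_cons' C x xs y _ _ _ (levAux_suffix_cons₁ C x xs ys),
    List.getElem_cons_zero]
  rfl

end LevAux

/-- The target's length is at most the source's length plus the edit distance. -/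
lemma length_le_length_add_editDist (x y : List Bool) :
    y.length ≤ x.length + editDist x y := by
  unfold editDist
  induction x generalizing y with
  | nil =>
    induction y with
    | nil => simp
    | cons b ys ih => simp only [levenshtein_nil_cons, Levenshtein.defaultCost_insert,
        List.length_cons] at *; omega
  | cons a xs ihx =>
    induction y with
    | nil => simp
    | cons b ys ihy =>
      rw [levenshtein_cons_cons]
      have h1 := ihx (b :: ys)
      have h3 := ihx ys
      simp only [Levenshtein.defaultCost_delete, Levenshtein.defaultCost_insert,
        List.length_cons] at *
      omega

/-- Splitting one fragment of an output multiset into head and tail stays in the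
channel output set with one more break. -/
lemma breakEdit_split (k te : ℕ) (c : List Bool) (S : Multiset (List Bool))
    (b : Bool) (rest : List Bool) (hrest : rest ≠ [])
    (hfS : (b :: rest) ∈ S) (hS : S ∈ BreakEdit k te c) :
    ([b] ::ₘ rest ::ₘ S.erase (b :: rest)) ∈ BreakEdit (k + 1) te c := by
  obtain ⟨hcard, hne, l, hl, hed⟩ := hS
  have hfl : (b :: rest) ∈ l := by rw [← hl] at hfS; exact_mod_cast hfS
  obtain ⟨l₁, l₂, rfl⟩ := List.append_of_mem hfl
  refine ⟨?_, ?_, l₁ ++ [b] :: rest :: l₂, ?_, ?_⟩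
  · rw [Multiset.card_cons, Multiset.card_cons, Multiset.card_erase_of_mem hfS, hcard]
    rfl
  · intro f hf
    rcases Multiset.mem_cons.mp hf with rfl | hf
    · simp
    rcases Multiset.mem_cons.mp hf with rfl | hf
    · exact hrest
    · exact hne f (Multiset.mem_of_mem_erase hf)
  · have hS' : S = (b :: rest) ::ₘ ↑(l₁ ++ l₂) := by
      rw [← hl, Multiset.cons_coe, Multiset.coe_eq_coe]
      exact List.perm_middle
    rw [hS', Multiset.erase_cons_head, Multiset.cons_coe, Multiset.cons_coe,
      Multiset.coe_eq_coe]
    exact List.perm_middle.trans (List.Perm.cons _ List.perm_middle)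
  · have : (l₁ ++ [b] :: rest :: l₂).flatten = (l₁ ++ (b :: rest) :: l₂).flatten := by
      simp
    rw [this]
    exact hed

/-- Climbing from `k` breaks to `t` breaks while keeping a common output multiset. -/
lemma breakEdit_climb (n te : ℕ) (c c' : List Bool) (hc : c.length = n) :
    ∀ d k : ℕ, k + d + te + 1 ≤ n →
      (∃ S, S ∈ BreakEdit k te c ∧ S ∈ BreakEdit k te c') →
      ∃ T, T ∈ BreakEdit (k + d) te c ∧ T ∈ BreakEdit (k + d) te c' := by
  intro d
  induction d with
  | zero => intro k _ h; simpa using h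
  | succ d ih =>
    intro k hk ⟨S, hS, hS'⟩
    -- find a fragment of length ≥ 2
    obtain ⟨hcard, hne, l, hl, hed⟩ := hS
    have hlenflat : n ≤ l.flatten.length + te := by
      calc n = c.length := hc.symm
        _ ≤ l.flatten.length + editDist l.flatten c := length_le_length_add_editDist _ _
        _ ≤ l.flatten.length + te := by omega
    have hll : l.length = k + 1 := by
      have := congrArg Multiset.card hl
      simpa [hcard] using this
    have hbig : ∃ f ∈ l, 2 ≤ f.length := by
      by_contra h
      push_neg at h
      have hsum : l.flatten.length ≤ l.length := by
        rw [List.length_flatten]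
        have := List.sum_le_card_nsmul (l.map List.length) 1 (by
          intro x hx
          obtain ⟨f, hf, rfl⟩ := List.mem_map.mp hx
          exact Nat.lt_succ_iff.mp (h f hf))
        simpa using this
      omega
    obtain ⟨f, hfl, hf2⟩ := hbig
    obtain ⟨b, rest, rfl⟩ : ∃ b rest, f = b :: rest := by
      cases f with
      | nil => simp at hf2
      | cons b rest => exact ⟨b, rest, rfl⟩
    have hrest : rest ≠ [] := by
      intro h; subst h; simp at hf2
    have hfS : (b :: rest) ∈ S := by rw [← hl]; exact_mod_cast hfl
    have hstep := breakEdit_split k te c S b rest hrest hfS ⟨hcard, hne, l, hl, hed⟩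
    have hstep' := breakEdit_split k te c' S b rest hrest hfS hS'
    have := ih (k + 1) (by omega) ⟨_, hstep, hstep'⟩
    have heq : k + 1 + d = k + (d + 1) := by omega
    rwa [heq] at this

theorem breaks_edits_disjoint_mono (n t te s se : ℕ)
    (hst : s ≤ t) (hse : se ≤ te) (hn : t + te + 1 ≤ n)
    (c c' : List Bool) (hc : c.length = n) (hc' : c'.length = n)
    (hdisj : BreakEdit t te c ∩ BreakEdit t te c' = ∅) :
    BreakEdit s se c ∩ BreakEdit s se c' = ∅ := by
  by_contra h
  obtain ⟨S, hS, hS'⟩ := Set.nonempty_iff_ne_empty.mpr h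
  -- relax se to te
  have mono : ∀ w (X : Multiset (List Bool)), X ∈ BreakEdit s se w → X ∈ BreakEdit s te w := by
    rintro w X ⟨h1, h2, l, h3, h4⟩
    exact ⟨h1, h2, l, h3, h4.trans hse⟩
  have := breakEdit_climb n te c c' hc (t - s) s (by omega)
    ⟨S, mono c S hS, mono c' S hS'⟩
  obtain ⟨T, hT, hT'⟩ := this
  rw [show s + (t - s) = t by omega] at hT hT'
  have : T ∈ BreakEdit t te c ∩ BreakEdit t te c' := ⟨hT, hT'⟩
  rw [hdisj] at this
  exact this
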